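/- For every finite tree T on n vertices, ν₂(T) = n − P(T); that is, the 2-matching number of T equals n minus the path cover number of T. -/

import Mathlib

open scoped Classical

variable {V : Type*}

/-- A 2-matching of a graph `G`: a set `M` of edges of `G` such that every vertex of `G` is
incident to at most two edges of `M`. -/
def IsTwoMatching (G : SimpleGraph V) (M : Finset (Sym2 V)) : Prop :=
  ↑M ⊆ G.edgeSet ∧ ∀ v : V, (M.filter (fun e => v ∈ e)).card ≤ 2

/-- The 2-matching number `ν₂(G)`: the maximum number of edges in a 2-matching of `G`. -/
noncomputable def twoMatchingNumber [Fintype V] (G : SimpleGraph V) : ℕ :=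
  sSup {k | ∃ M : Finset (Sym2 V), IsTwoMatching G M ∧ M.card = k}

/-- `S` induces a path in `G`: the subgraph of `G` induced on `S` is (isomorphic to) a path
graph. -/
def IsInducedPath (G : SimpleGraph V) (S : Set V) : Prop :=
  ∃ n : ℕ, Nonempty (G.induce S ≃g SimpleGraph.pathGraph n)

/-- `P` is a path cover of `G`: a family of vertex-disjoint induced paths of `G` whose
vertex sets together cover all of `V(G)` (every vertex lies in exactly one member of `P`). -/
def IsPathCover (G : SimpleGraph V) (P : Finset (Set V)) : Prop :=
  (∀ S ∈ P, IsInducedPath G S) ∧ ∀ v : V, ∃! S : Set V, S ∈ P ∧ v ∈ S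

/-- The path cover number `P(G)`: the minimum number of vertex-disjoint induced paths of `G`
needed to cover all vertices of `G`. -/
noncomputable def pathCoverNumber [Fintype V] (G : SimpleGraph V) : ℕ :=
  sInf {k | ∃ P : Finset (Set V), IsPathCover G P ∧ P.card = k}


section Aux

open SimpleGraph

variable {G : SimpleGraph V}

/-- Extract a sub-path between indices of a path. -/
lemma subpath_exists : ∀ {u v : V} (p : G.Walk u v), p.IsPath → ∀ i j : ℕ, i ≤ j → j ≤ p.length →
    ∃ q : G.Walk (p.getVert i) (p.getVert j), q.IsPath ∧ q.length = j - i ∧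
      ∀ x ∈ q.support, x ∈ p.support := by
  intro u v p
  induction p with
  | nil =>
    intro _ i j hij hj
    simp only [Walk.length_nil, Nat.le_zero] at hj
    subst hj; interval_cases i
    exact ⟨Walk.nil, by simp⟩
  | @cons a b c h p ih =>
    intro hp i j hij hj
    rcases hp.of_cons with hp'
    have hans : a ∉ p.support := (Walk.cons_isPath_iff _ _).mp hp |>.2
    match i, j with
    | 0, 0 => exact ⟨(Walk.nil : G.Walk a a).copy (by simp) (by simp), by simp⟩
    | 0, (k+1) =>
      obtain ⟨q, hq, hlen, hsub⟩ := ih hp' 0 k (Nat.zero_le _) (by simpa [Nat.succ_le_succ_iff] using hj)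
      refine ⟨(Walk.cons h (q.copy p.getVert_zero rfl)).copy (by simp) (Walk.getVert_cons_succ p h).symm, ?_, ?_, ?_⟩
      · rw [Walk.isPath_copy, Walk.cons_isPath_iff]
        refine ⟨by simpa using hq, ?_⟩
        simp only [Walk.support_copy]
        exact fun hmem => hans (hsub _ hmem)
      · rw [Walk.length_copy, Walk.length_cons, Walk.length_copy, hlen]; omega
      · intro x hx
        simp only [Walk.support_copy, Walk.support_cons, List.mem_cons] at hx
        rcases hx with rfl | hx
        · simp
        · exact List.mem_cons_of_mem _ (hsub _ hx)
    | (k+1), (l+1) =>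
      obtain ⟨q, hq, hlen, hsub⟩ := ih hp' k l (Nat.succ_le_succ_iff.mp hij)
        (by simpa [Nat.succ_le_succ_iff] using hj)
      refine ⟨q.copy (Walk.getVert_cons_succ p h).symm (Walk.getVert_cons_succ p h).symm, ?_, ?_, ?_⟩
      · simpa using hq
      · simpa using hlen
      · intro x hx
        simp only [Walk.support_copy] at hx
        exact List.mem_cons_of_mem _ (hsub _ hx)

/-- getVert is injective on a path. -/
lemma getVert_inj {u v : V} (p : G.Walk u v) (hp : p.IsPath) {i j : ℕ} (hi : i ≤ p.length)
    (hj : j ≤ p.length) (h : p.getVert i = p.getVert j) : i = j := by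
  wlog hij : i ≤ j generalizing i j
  · exact (this hj hi h.symm (le_of_not_ge hij)).symm
  obtain ⟨q, hq, hlen, -⟩ := subpath_exists p hp i j hij hj
  have hP : (q.copy rfl h.symm).IsPath := by rw [Walk.isPath_copy]; exact hq
  have hnil := Walk.isPath_iff_eq_nil.mp hP
  have h0 : (q.copy rfl h.symm).length = 0 := by rw [hnil]; rfl
  simp only [Walk.length_copy] at h0
  omega

/-- In an acyclic graph, a path has no chords among its vertices. -/
lemma no_chord (hG : G.IsAcyclic) {u v : V} (p : G.Walk u v) (hp : p.IsPath) {i j : ℕ}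
    (hij : i < j) (hj : j ≤ p.length) (hadj : G.Adj (p.getVert i) (p.getVert j)) :
    j = i + 1 := by
  by_contra hne
  obtain ⟨q, hq, hlen, -⟩ := subpath_exists p hp i j hij.le hj
  have h2 : 2 ≤ q.length := by omega
  have huniq := hG.path_unique ⟨q, hq⟩ (Path.singleton hadj)
  have hval : q = ↑(Path.singleton hadj) := congrArg Subtype.val huniq
  have : q.length = 1 := by rw [hval]; simp [Path.singleton]
  omega

lemma getVert_mem_support' {G : SimpleGraph V} {u v : V} (p : G.Walk u v) {n : ℕ}
    (hn : n ≤ p.length) : p.getVert n ∈ p.support :=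
  Walk.mem_support_iff_exists_getVert.mpr ⟨n, rfl, hn⟩

/-- In a graph of max degree ≤ 2, every connected component carries a Hamiltonian path. -/
lemma exists_spanning_path [Fintype V] (H : SimpleGraph V) (hdeg : ∀ v, H.degree v ≤ 2)
    (c : H.ConnectedComponent) :
    ∃ (u w : V) (p : H.Walk u w), p.IsPath ∧ H.connectedComponentMk u = c ∧
      ∀ x, x ∈ p.support ↔ H.connectedComponentMk x = c := by
  classical
  set A : Set ℕ := {k | ∃ (u w : V) (p : H.Walk u w), p.IsPath ∧
    H.connectedComponentMk u = c ∧ p.length = k} with hA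
  obtain ⟨u0, hu0⟩ := c.exists_rep
  have hne : A.Nonempty := ⟨0, u0, u0, Walk.nil, Walk.IsPath.nil, hu0, rfl⟩
  have hbdd : BddAbove A := by
    refine ⟨Fintype.card V, ?_⟩
    rintro k ⟨u, w, p, hp, -, rfl⟩
    exact hp.length_lt.le
  obtain ⟨u, w, p, hp, huc, hlen⟩ := Nat.sSup_mem hne hbdd
  have hmax : ∀ (a b : V) (q : H.Walk a b), q.IsPath → H.connectedComponentMk a = c →
      q.length ≤ p.length := by
    intro a b q hq hac
    rw [hlen]
    exact le_csSup hbdd ⟨a, b, q, hq, hac, rfl⟩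
  refine ⟨u, w, p, hp, huc, fun x => ⟨?_, ?_⟩⟩
  · intro hx
    obtain ⟨q, r, rfl⟩ := Walk.mem_support_iff_exists_append.mp hx
    rw [← huc]
    exact (ConnectedComponent.eq.mpr ⟨q⟩).symm
  · intro hxc
    by_contra hxs
    have hreach : H.Reachable x u := ConnectedComponent.eq.mp (hxc.trans huc.symm)
    obtain ⟨q⟩ := hreach
    obtain ⟨d, -, hd1, hd2⟩ := q.exists_boundary_dart {y | y ∉ p.support} hxs
      (by simp [p.start_mem_support])
    simp only [Set.mem_setOf_eq, not_not] at hd1 hd2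
    set a := d.fst with ha
    set b := d.snd with hb
    have hab : H.Adj a b := d.adj
    -- b = p.getVert k
    obtain ⟨k, hbk, hk⟩ := Walk.mem_support_iff_exists_getVert.mp hd2
    rcases Nat.eq_zero_or_pos k with rfl | hkpos
    · -- b = u : extend at the front
      rw [p.getVert_zero] at hbk
      subst hbk
      have hnew : (Walk.cons hab p).IsPath := (Walk.cons_isPath_iff _ _).mpr ⟨hp, hd1⟩
      have hac : H.connectedComponentMk a = c := by
        rw [← huc]; exact ConnectedComponent.eq.mpr ⟨hab.toWalk⟩
      have := hmax _ _ _ hnew hac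
      simp at this
    rcases eq_or_lt_of_le hk with rfl | hklt
    · -- b = w : extend at the back
      rw [p.getVert_length] at hbk
      subst hbk
      have hnew : (Walk.cons hab p.reverse).IsPath := by
        rw [Walk.cons_isPath_iff]
        exact ⟨hp.reverse, by simpa using hd1⟩
      have hac : H.connectedComponentMk a = c := by
        rw [← huc]; exact ConnectedComponent.eq.mpr ⟨Walk.cons hab p.reverse⟩
      have := hmax _ _ _ hnew hac
      simp at this
    · -- interior vertex: degree ≥ 3
      have h1 : H.Adj b (p.getVert (k - 1)) := by
        have := p.adj_getVert_succ (i := k - 1) (by omega)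
        rw [show k - 1 + 1 = k by omega, hbk] at this
        exact this.symm
      have h2 : H.Adj b (p.getVert (k + 1)) := by
        have := p.adj_getVert_succ (i := k) (by omega)
        rwa [hbk] at this
      have hne12 : p.getVert (k - 1) ≠ p.getVert (k + 1) := by
        intro hcon
        have := getVert_inj p hp (by omega) (by omega) hcon
        omega
      have hnea1 : a ≠ p.getVert (k - 1) := by
        intro hcon; exact hd1 (hcon ▸ getVert_mem_support' p (by omega))
      have hnea2 : a ≠ p.getVert (k + 1) := by
        intro hcon; exact hd1 (hcon ▸ getVert_mem_support' p (by omega))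
      have hsub : ({p.getVert (k-1), p.getVert (k+1), a} : Finset V) ⊆ H.neighborFinset b := by
        intro y hy
        simp only [Finset.mem_insert, Finset.mem_singleton] at hy
        rcases hy with rfl | rfl | rfl
        · exact (mem_neighborFinset _ _ _).mpr h1
        · exact (mem_neighborFinset _ _ _).mpr h2
        · exact (mem_neighborFinset _ _ _).mpr hab.symm
      have hcard : 3 ≤ H.degree b := by
        rw [← card_neighborFinset_eq_degree]
        refine le_trans (le_of_eq ?_) (Finset.card_le_card hsub)
        rw [Finset.card_insert_of_notMem, Finset.card_insert_of_notMem, Finset.card_singleton]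
        · simpa using hnea2.symm
        · simp only [Finset.mem_insert, Finset.mem_singleton]
          push_neg
          exact ⟨hne12, hnea1.symm⟩
      have := hdeg b
      omega

/-- The support of a path in an acyclic graph induces a path graph. -/
lemma induced_path_iso {G : SimpleGraph V} (hG : G.IsAcyclic) {u v : V} (p : G.Walk u v)
    (hp : p.IsPath) (S : Set V) (hS : ∀ x, x ∈ S ↔ x ∈ p.support) :
    Nonempty (G.induce S ≃g pathGraph (p.length + 1)) := by
  have hmem : ∀ i : Fin (p.length + 1), p.getVert i ∈ S := fun i =>
    (hS _).mpr (getVert_mem_support' p (by omega))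
  have hinj : Function.Injective (fun i : Fin (p.length + 1) => p.getVert i) := by
    intro i j hij
    exact Fin.ext (getVert_inj p hp (by omega) (by omega) hij)
  let f : Fin (p.length + 1) → ↥S := fun i => ⟨p.getVert i, hmem i⟩
  have hbij : Function.Bijective f := by
    constructor
    · intro i j hij
      exact hinj (congrArg Subtype.val hij)
    · rintro ⟨x, hx⟩
      obtain ⟨n, hn, hnle⟩ := Walk.mem_support_iff_exists_getVert.mp ((hS x).mp hx)
      exact ⟨⟨n, by omega⟩, Subtype.ext hn⟩
  let e : Fin (p.length + 1) ≃ ↥S := Equiv.ofBijective f hbij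
  refine ⟨(RelIso.mk e ?_).symm⟩
  intro i j
  show (G.induce S).Adj (f i) (f j) ↔ (pathGraph (p.length + 1)).Adj i j
  rw [pathGraph_adj]
  constructor
  · intro hadj
    have hadj' : G.Adj (p.getVert i) (p.getVert j) := hadj
    rcases lt_trichotomy (i : ℕ) (j : ℕ) with hlt | heq | hlt
    · exact Or.inl (no_chord hG p hp hlt (by omega) hadj').symm
    · exact absurd (hinj (Fin.ext heq ▸ rfl : p.getVert i = p.getVert j)) (by
        intro; exact G.irrefl (heq ▸ hadj' : G.Adj (p.getVert i) (p.getVert i)))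
    · exact Or.inr (no_chord hG p hp hlt (by omega) hadj'.symm).symm
  · rintro (hij | hji)
    · have := p.adj_getVert_succ (i := i) (by omega)
      rw [hij] at this
      exact this
    · have := p.adj_getVert_succ (i := j) (by omega)
      rw [hji] at this
      exact this.symm

lemma pathEdges_spec [Fintype V] {G : SimpleGraph V} {S : Set V} (h : IsInducedPath G S) :
    ∃ E : Finset (Sym2 V),
      (↑E ⊆ G.edgeSet) ∧
      (∀ e ∈ E, ∀ x ∈ e, x ∈ S) ∧
      (E.card = S.toFinset.card - 1) ∧
      (∀ v (hv : v ∈ S), (E.filter (fun e => v ∈ e)).card ≤ 2) := by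
  classical
  obtain ⟨m, ⟨φ⟩⟩ := h
  have hcard : S.toFinset.card = m := by
    rw [Set.toFinset_card]
    exact (Fintype.card_congr φ.toEquiv).trans (Fintype.card_fin m)
  set ψ : Fin m → V := fun i => ((φ.symm i : ↥S) : V) with hψ
  have hψinj : Function.Injective ψ := fun i j hij =>
    φ.symm.toEquiv.injective (Subtype.ext hij)
  have hψS : ∀ i, ψ i ∈ S := fun i => (φ.symm i).2
  have hψadj : ∀ i j : Fin m, (pathGraph m).Adj i j → G.Adj (ψ i) (ψ j) := by
    intro i j hij
    have := φ.symm.map_adj_iff.mpr hij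
    exact this
  set g : Fin (m - 1) → Sym2 V := fun i =>
    s(ψ ⟨i.1, lt_of_lt_of_le i.isLt (Nat.sub_le m 1)⟩, ψ ⟨i.1 + 1, Nat.add_lt_of_lt_sub i.isLt⟩)
    with hg
  have hginj : Function.Injective g := by
    intro i j hij
    simp only [hg, Sym2.eq, Sym2.rel_iff', Prod.mk.injEq, Prod.swap_prod_mk] at hij
    rcases hij with ⟨h1, -⟩ | ⟨h1, h2⟩
    · have e1 : (⟨i.1, _⟩ : Fin m).1 = (⟨j.1, _⟩ : Fin m).1 := congrArg Fin.val (hψinj h1)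
      exact Fin.ext e1
    · have e1 : (⟨i.1, _⟩ : Fin m).1 = (⟨j.1+1, _⟩ : Fin m).1 := congrArg Fin.val (hψinj h1)
      have e2 : (⟨i.1+1, _⟩ : Fin m).1 = (⟨j.1, _⟩ : Fin m).1 := congrArg Fin.val (hψinj h2)
      simp only at e1 e2
      exact absurd e2 (by omega)
  refine ⟨Finset.univ.image g, ?_, ?_, ?_, ?_⟩
  · intro e he
    simp only [Finset.coe_image, Set.mem_image, Finset.mem_coe, Finset.mem_univ] at he
    obtain ⟨i, -, rfl⟩ := he
    rw [hg]
    apply G.mem_edgeSet.mpr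
    apply hψadj
    rw [pathGraph_adj]
    exact Or.inl rfl
  · intro e he x hx
    simp only [Finset.mem_image, Finset.mem_univ, true_and] at he
    obtain ⟨i, rfl⟩ := he
    rw [Sym2.mem_iff] at hx
    rcases hx with rfl | rfl <;> exact hψS _
  · rw [Finset.card_image_of_injective _ hginj, Finset.card_univ, Fintype.card_fin, hcard]
  · intro v hv
    set j : Fin m := φ ⟨v, hv⟩ with hj
    have hvj : v = ψ j := by
      simp only [hψ, hj, Equiv.symm_apply_apply, RelIso.symm_apply_apply]
    rw [Finset.filter_image]
    rw [Finset.card_image_of_injective _ hginj]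
    have hsub : (Finset.univ.filter (fun i : Fin (m-1) => v ∈ g i)) ⊆
        Finset.univ.filter (fun i : Fin (m-1) => i.1 = j.1 ∨ i.1 + 1 = j.1) := by
      intro i hi
      simp only [Finset.mem_filter, Finset.mem_univ, true_and] at hi ⊢
      rw [hg, Sym2.mem_iff] at hi
      rcases hi with h1 | h1
      · left
        have := hψinj (hvj ▸ h1.symm)
        exact (congrArg Fin.val this).symm ▸ rfl
      · right
        have := hψinj (hvj ▸ h1.symm)
        exact congrArg Fin.val this
    refine le_trans (Finset.card_le_card hsub) ?_
    have : (Finset.univ.filter (fun i : Fin (m-1) => i.1 = j.1 ∨ i.1 + 1 = j.1)).card ≤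
        ({j.1, j.1 - 1} : Finset ℕ).card := by
      apply Finset.card_le_card_of_injOn (fun i => i.1)
      · intro i hi
        simp only [Finset.mem_coe, Finset.mem_filter, Finset.mem_univ, true_and] at hi
        simp only [Finset.mem_coe, Finset.mem_insert, Finset.mem_singleton]
        omega
      · intro a _ b _ hab
        exact Fin.ext hab
    refine le_trans this ?_
    refine le_trans (Finset.card_insert_le _ _) ?_
    simp

lemma cover_to_matching [Fintype V] (G : SimpleGraph V) (P : Finset (Set V))
    (hP : IsPathCover G P) :
    ∃ M : Finset (Sym2 V), IsTwoMatching G M ∧ Fintype.card V ≤ M.card + P.card := by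
  classical
  choose E hE1 hE2 hE3 hE4 using fun (S : {x // x ∈ P}) => pathEdges_spec (hP.1 S.1 S.2)
  -- the unique covering set of each vertex
  have hcov := hP.2
  set f : V → Set V := fun v => (hcov v).choose with hf
  have hfP : ∀ v, f v ∈ P := fun v => (hcov v).choose_spec.1.1
  have hfv : ∀ v, v ∈ f v := fun v => (hcov v).choose_spec.1.2
  have hfuniq : ∀ v (S : Set V), S ∈ P → v ∈ S → S = f v := fun v S h1 h2 =>
    (hcov v).choose_spec.2 S ⟨h1, h2⟩
  set M : Finset (Sym2 V) := P.attach.biUnion E with hM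
  have hdisj : ∀ x ∈ P.attach, ∀ y ∈ P.attach, x ≠ y → Disjoint (E x) (E y) := by
    intro x _ y _ hxy
    rw [Finset.disjoint_left]
    intro e hex hey
    induction e using Sym2.ind with
    | _ a b =>
      have hax : a ∈ x.1 := hE2 x _ hex a (Sym2.mem_mk_left a b)
      have hay : a ∈ y.1 := hE2 y _ hey a (Sym2.mem_mk_left a b)
      have : x.1 = y.1 := (hfuniq a x.1 x.2 hax).trans (hfuniq a y.1 y.2 hay).symm
      exact hxy (Subtype.ext this)
  have hMcard : M.card = ∑ S ∈ P.attach, (E S).card := Finset.card_biUnion hdisj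
  have hsum : Fintype.card V = ∑ S ∈ P, S.toFinset.card := by
    rw [← Finset.card_univ]
    rw [Finset.card_eq_sum_card_fiberwise (f := f) (t := P) (fun v _ => hfP v)]
    refine Finset.sum_congr rfl fun S hS => ?_
    congr 1
    ext w
    simp only [Finset.mem_filter, Finset.mem_univ, true_and, Set.mem_toFinset]
    constructor
    · rintro rfl; exact hfv w
    · intro hw; exact (hfuniq w S hS hw).symm
  refine ⟨M, ⟨?_, ?_⟩, ?_⟩
  · -- subset of edge set
    intro e he
    simp only [hM, Finset.coe_biUnion, Set.mem_iUnion, Finset.mem_coe] at he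
    obtain ⟨S, -, heS⟩ := he
    exact hE1 S heS
  · -- degree bound
    intro v
    have hsubf : M.filter (fun e => v ∈ e) ⊆ (E ⟨f v, hfP v⟩).filter (fun e => v ∈ e) := by
      intro e he
      rw [Finset.mem_filter] at he ⊢
      refine ⟨?_, he.2⟩
      obtain ⟨S, -, heS⟩ := Finset.mem_biUnion.mp he.1
      have hvS : v ∈ S.1 := hE2 S _ heS v he.2
      have : S.1 = f v := hfuniq v S.1 S.2 hvS
      have hSeq : S = ⟨f v, hfP v⟩ := Subtype.ext this
      exact hSeq ▸ heS
    exact le_trans (Finset.card_le_card hsubf) (hE4 _ v (hfv v))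
  · -- counting
    rw [hMcard, hsum]
    have : ∑ S ∈ P, S.toFinset.card = ∑ S ∈ P.attach, S.1.toFinset.card := by
      rw [← Finset.sum_attach P (fun S => S.toFinset.card)]
    rw [this]
    have hle : ∀ S ∈ P.attach, S.1.toFinset.card ≤ (E S).card + 1 := by
      intro S _
      rw [hE3 S]
      omega
    calc ∑ S ∈ P.attach, S.1.toFinset.card ≤ ∑ S ∈ P.attach, ((E S).card + 1) :=
          Finset.sum_le_sum hle
      _ = (∑ S ∈ P.attach, (E S).card) + P.card := by
          rw [Finset.sum_add_distrib, Finset.sum_const, smul_eq_mul, mul_one,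
            Finset.card_attach]


lemma matching_to_cover [Fintype V] (T : SimpleGraph V) (hacyc : T.IsAcyclic)
    (M : Finset (Sym2 V)) (hM : IsTwoMatching T M) :
    ∃ P : Finset (Set V), IsPathCover T P ∧ P.card + M.card = Fintype.card V := by
  classical
  set H : SimpleGraph V := SimpleGraph.fromEdgeSet ↑M with hH
  clear_value H
  have hle : H ≤ T := by
    rw [hH, ← fromEdgeSet_edgeSet T]
    exact fromEdgeSet_mono hM.1
  have hHedge : H.edgeSet = ↑M := by
    rw [hH, edgeSet_fromEdgeSet]
    ext e
    simp only [Set.mem_diff, Set.mem_setOf_eq, Finset.mem_coe]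
    exact ⟨fun h => h.1, fun h => ⟨h, fun hd => T.not_isDiag_of_mem_edgeSet (hM.1 h) hd⟩⟩
  have hHacyc : H.IsAcyclic := by
    intro v c hc
    exact hacyc (c.mapLe hle) (hc.mapLe hle)
  have hHdeg : ∀ v, H.degree v ≤ 2 := by
    intro v
    rw [← card_neighborFinset_eq_degree]
    have hcle : (H.neighborFinset v).card ≤ (M.filter (fun e => v ∈ e)).card := by
      apply Finset.card_le_card_of_injOn (fun w => s(v, w))
      · intro w hw
        rw [Finset.mem_coe, mem_neighborFinset] at hw
        rw [Finset.mem_coe, Finset.mem_filter]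
        constructor
        · rw [← Finset.mem_coe, ← hHedge]
          exact hw
        · exact Sym2.mem_mk_left v w
      · intro a _ b _ hab
        exact Sym2.congr_right.mp hab
    exact le_trans hcle (hM.2 v)
  -- spanning paths of the components
  choose u w p hpath hstart hsupp using fun c => exists_spanning_path H hHdeg c
  set Sset : H.ConnectedComponent → Set V := fun c => {x | H.connectedComponentMk x = c}
    with hSset
  have hSsupp : ∀ c x, x ∈ Sset c ↔ x ∈ (p c).support := fun c x => by
    rw [hSset]; exact ⟨fun h => (hsupp c x).mpr h, fun h => (hsupp c x).mp h⟩
  have hSinj : Function.Injective Sset := by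
    intro c c' hcc
    obtain ⟨x, hx⟩ := c.exists_rep
    have hx1 : x ∈ Sset c := hx
    rw [hcc] at hx1
    exact hx.symm.trans hx1
  set P : Finset (Set V) := Finset.univ.image Sset with hP
  have hPcard : P.card = Fintype.card H.ConnectedComponent := by
    rw [hP, Finset.card_image_of_injective _ hSinj, Finset.card_univ]
  -- support of the walk in T
  have hTsupport : ∀ c, ((p c).mapLe hle).support = (p c).support := by
    intro c
    simp only [Walk.mapLe, Walk.support_map]
    have : ⇑(Hom.ofLE hle) = id := rfl
    rw [this, List.map_id]
  have hcover : IsPathCover T P := by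
    constructor
    · rintro S hS
      obtain ⟨c, -, rfl⟩ := Finset.mem_image.mp hS
      have hq : ((p c).mapLe hle).IsPath := (hpath c).mapLe hle
      have hiso := induced_path_iso hacyc ((p c).mapLe hle) hq (Sset c)
        (fun x => (hSsupp c x).trans (by rw [hTsupport c]))
      exact ⟨_, hiso⟩
    · intro v
      refine ⟨Sset (H.connectedComponentMk v), ⟨Finset.mem_image_of_mem _ (Finset.mem_univ _), rfl⟩, ?_⟩
      rintro S ⟨hSP, hvS⟩
      obtain ⟨c, -, rfl⟩ := Finset.mem_image.mp hSP
      rw [show c = H.connectedComponentMk v from hvS.symm]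
  -- counting
  have hfiber : ∀ c, (Sset c).toFinset.card = (p c).length + 1 := by
    intro c
    have h1 : (Sset c).toFinset = (p c).support.toFinset := by
      ext x
      simp only [Set.mem_toFinset, List.mem_toFinset]
      exact hSsupp c x
    rw [h1, List.toFinset_card_of_nodup (hpath c).support_nodup, Walk.length_support]
  have hvert : Fintype.card V = ∑ c : H.ConnectedComponent, ((p c).length + 1) := by
    rw [← Finset.card_univ,
      Finset.card_eq_sum_card_fiberwise
        (f := H.connectedComponentMk) (t := Finset.univ) (fun v _ => Finset.mem_univ _)]
    refine Finset.sum_congr rfl fun c _ => ?_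
    rw [← hfiber c]
    congr 1
    ext x
    simp only [Finset.mem_filter, Finset.mem_univ, true_and, Set.mem_toFinset]
    exact Iff.rfl
  -- edge counting
  have hMsplit : M = Finset.univ.biUnion
      (fun c => M.filter (fun e => ∀ x ∈ e, H.connectedComponentMk x = c)) := by
    ext e
    simp only [Finset.mem_biUnion, Finset.mem_univ, true_and, Finset.mem_filter]
    constructor
    · intro he
      induction e using Sym2.ind with
      | _ a b =>
        have hadj : H.Adj a b := by
          rw [← mem_edgeSet, hHedge]; exact he
        refine ⟨H.connectedComponentMk a, he, ?_⟩
        intro x hx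
        rw [Sym2.mem_iff] at hx
        rcases hx with rfl | rfl
        · rfl
        · exact (ConnectedComponent.eq.mpr ⟨hadj.toWalk⟩).symm
    · rintro ⟨c, he, -⟩
      exact he
  have hMdisj : ∀ x ∈ (Finset.univ : Finset H.ConnectedComponent), ∀ y ∈ Finset.univ, x ≠ y →
      Disjoint (M.filter (fun e => ∀ z ∈ e, H.connectedComponentMk z = x))
        (M.filter (fun e => ∀ z ∈ e, H.connectedComponentMk z = y)) := by
    intro x _ y _ hxy
    rw [Finset.disjoint_left]
    intro e hex hey
    induction e using Sym2.ind with
    | _ a b =>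
      rw [Finset.mem_filter] at hex hey
      exact hxy ((hex.2 a (Sym2.mem_mk_left a b)).symm.trans (hey.2 a (Sym2.mem_mk_left a b)))
  have hfiltcard : ∀ c : H.ConnectedComponent,
      (M.filter (fun e => ∀ x ∈ e, H.connectedComponentMk x = c)).card = (p c).length := by
    intro c
    have heq : M.filter (fun e => ∀ x ∈ e, H.connectedComponentMk x = c) =
        Finset.univ.image (fun i : Fin (p c).length =>
          s((p c).getVert i, (p c).getVert (i + 1))) := by
      ext e
      simp only [Finset.mem_filter, Finset.mem_image, Finset.mem_univ, true_and]
      constructor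
      · rintro ⟨heM, hcomp⟩
        induction e using Sym2.ind with
        | _ a b =>
          have hadj : H.Adj a b := by rw [← mem_edgeSet, hHedge]; exact heM
          have ha : a ∈ (p c).support :=
            (hsupp c a).mpr (hcomp a (Sym2.mem_mk_left a b))
          have hb : b ∈ (p c).support :=
            (hsupp c b).mpr (hcomp b (Sym2.mem_mk_right a b))
          obtain ⟨i, hia, hi⟩ := Walk.mem_support_iff_exists_getVert.mp ha
          obtain ⟨j, hjb, hj⟩ := Walk.mem_support_iff_exists_getVert.mp hb
          rcases lt_trichotomy i j with hij | rfl | hij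
          · have := no_chord hHacyc (p c) (hpath c) hij hj (by rw [hia, hjb]; exact hadj)
            subst this
            exact ⟨⟨i, by omega⟩, by rw [hia, hjb]⟩
          · exact absurd (hia.symm.trans hjb) hadj.ne
          · have := no_chord hHacyc (p c) (hpath c) hij hi (by rw [hia, hjb]; exact hadj.symm)
            subst this
            exact ⟨⟨j, by omega⟩, by rw [hia, hjb, Sym2.eq_swap]⟩
      · rintro ⟨i, rfl⟩
        have hadj : H.Adj ((p c).getVert i) ((p c).getVert (i + 1)) :=
          (p c).adj_getVert_succ i.isLt
        constructor
        · rw [← Finset.mem_coe, ← hHedge]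
          exact hadj
        · intro x hx
          rw [Sym2.mem_iff] at hx
          rcases hx with rfl | rfl
          · exact (hsupp c _).mp (getVert_mem_support' (p c) (by omega))
          · exact (hsupp c _).mp (getVert_mem_support' (p c) (by omega))
    rw [heq]
    rw [Finset.card_image_of_injective, Finset.card_univ, Fintype.card_fin]
    intro i j hij
    simp only [Sym2.eq, Sym2.rel_iff', Prod.mk.injEq, Prod.swap_prod_mk] at hij
    rcases hij with ⟨h1, -⟩ | ⟨h1, h2⟩
    · exact Fin.ext (getVert_inj (p c) (hpath c) (by omega) (by omega) h1)
    · have e1 := getVert_inj (p c) (hpath c) (by omega) (by omega) h1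
      have e2 := getVert_inj (p c) (hpath c) (by omega) (by omega) h2
      omega
  have hMcard : M.card = ∑ c : H.ConnectedComponent, (p c).length := by
    rw [hMsplit, Finset.card_biUnion hMdisj]
    exact Finset.sum_congr rfl fun c _ => hfiltcard c
  refine ⟨P, hcover, ?_⟩
  rw [hPcard, hMcard, hvert, Finset.sum_add_distrib, Finset.sum_const, smul_eq_mul, mul_one,
    Finset.card_univ, add_comm]

end Aux

/-- For every finite tree `T` on `n` vertices, `ν₂(T) = n - P(T)`: the
2-matching number of `T` equals `n` minus the path cover number of `T`. -/
theorem tree_twoMatchingNumber_eq {V : Type*} [Fintype V] (T : SimpleGraph V)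
    (hconn : T.Connected) (hacyc : T.IsAcyclic) :
    twoMatchingNumber T = Fintype.card V - pathCoverNumber T := by
  classical
  have hAne : {k | ∃ M : Finset (Sym2 V), IsTwoMatching T M ∧ M.card = k}.Nonempty :=
    ⟨0, ∅, ⟨by simp, by simp⟩, rfl⟩
  have hAbdd : BddAbove {k | ∃ M : Finset (Sym2 V), IsTwoMatching T M ∧ M.card = k} :=
    ⟨Fintype.card (Sym2 V), by rintro k ⟨M, -, rfl⟩; exact Finset.card_le_univ M⟩
  obtain ⟨M, hMtm, hMcard⟩ := Nat.sSup_mem hAne hAbdd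
  obtain ⟨P₀, hP₀cov, hP₀cnt⟩ := matching_to_cover T hacyc M hMtm
  have hBne : {k | ∃ P : Finset (Set V), IsPathCover T P ∧ P.card = k}.Nonempty :=
    ⟨P₀.card, P₀, hP₀cov, rfl⟩
  obtain ⟨P₁, hP₁cov, hP₁card⟩ := Nat.sInf_mem hBne
  have hpc_le : pathCoverNumber T ≤ P₀.card := Nat.sInf_le ⟨P₀, hP₀cov, rfl⟩
  obtain ⟨M₁, hM₁tm, hM₁cnt⟩ := cover_to_matching T P₁ hP₁cov
  have hM₁le : M₁.card ≤ twoMatchingNumber T := le_csSup hAbdd ⟨M₁, hM₁tm, rfl⟩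
  have h1 : twoMatchingNumber T = M.card := by
    rw [twoMatchingNumber]; exact hMcard.symm
  have h2 : pathCoverNumber T = P₁.card := by
    rw [pathCoverNumber]; exact hP₁card.symm
  omega
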